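/- Projection error moment estimate for the projected Milstein scheme: let d ∈ ℕ (d ≥ 1), γ ∈ [1,∞) and p ∈ [1,∞). For h ∈ (0,1] define 𝒫_h : ℝ^d → ℝ^d by 𝒫_h(x) := min{1, h^{−1/(2γ)}/‖x‖}·x (with 𝒫_h(0) := 0). Then for every probability space (Ω, ℱ, ℙ), every h ∈ (0,1] and every measurable ζ : Ω → ℝ^d, E[‖ζ − 𝒫_h(ζ)‖^{2p}] ≤ h^{4p}·E[‖ζ‖^{2(4γ+1)p}] (both sides interpreted in [0,∞]). -/

import Mathlib

open MeasureTheory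
open scoped ENNReal

/-- Projection error moment estimate for the projected Milstein scheme. -/
theorem projection_error_moment_estimate
    (d : ℕ) (hd : 1 ≤ d) (γ p : ℝ) (hγ : 1 ≤ γ) (hp : 1 ≤ p) :
    ∀ (Ω : Type) [MeasurableSpace Ω] (ℙ : Measure Ω) [IsProbabilityMeasure ℙ],
    ∀ h : ℝ, 0 < h → h ≤ 1 →
    ∀ ζ : Ω → EuclideanSpace ℝ (Fin d), Measurable ζ →
      (∫⁻ ω, (‖ζ ω - (min 1 (h ^ (-(1 / (2 * γ))) / ‖ζ ω‖)) • ζ ω‖₊ : ℝ≥0∞) ^ (2 * p) ∂ℙ)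
        ≤ ENNReal.ofReal (h ^ (4 * p))
          * ∫⁻ ω, (‖ζ ω‖₊ : ℝ≥0∞) ^ (2 * (4 * γ + 1) * p) ∂ℙ := by
  intro Ω _ ℙ _ h h0 h1 ζ hζ
  have hγ0 : (0:ℝ) < γ := lt_of_lt_of_le one_pos hγ
  have hp0 : (0:ℝ) < p := lt_of_lt_of_le one_pos hp
  have key : ∀ ω, (‖ζ ω - (min 1 (h ^ (-(1 / (2 * γ))) / ‖ζ ω‖)) • ζ ω‖₊ : ℝ≥0∞) ^ (2 * p)
      ≤ ENNReal.ofReal (h ^ (4 * p)) * (‖ζ ω‖₊ : ℝ≥0∞) ^ (2 * (4 * γ + 1) * p) := by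
    intro ω
    set x := ζ ω with hx
    set R : ℝ := h ^ (-(1 / (2 * γ))) with hRdef
    have hRpos : 0 < R := Real.rpow_pos_of_pos h0 _
    by_cases hle : ‖x‖ ≤ R
    · -- projection does nothing, error is 0
      have hvec : x - (min 1 (R / ‖x‖)) • x = 0 := by
        by_cases hx0 : x = 0
        · simp [hx0]
        · have hxn : 0 < ‖x‖ := norm_pos_iff.mpr hx0
          have : (1:ℝ) ≤ R / ‖x‖ := (one_le_div hxn).mpr hle
          rw [min_eq_left this]
          simp
      rw [hvec]
      simp only [nnnorm_zero, ENNReal.coe_zero]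
      rw [ENNReal.zero_rpow_of_pos (by positivity)]
      exact zero_le
    · push_neg at hle
      have hxn : 0 < ‖x‖ := lt_trans hRpos hle
      have hdiv : R / ‖x‖ < 1 := (div_lt_one hxn).mpr hle
      have hmin : min 1 (R / ‖x‖) = R / ‖x‖ := min_eq_right hdiv.le
      have hnorm : ‖x - (min 1 (R / ‖x‖)) • x‖ = ‖x‖ - R := by
        rw [hmin]
        have : x - (R / ‖x‖) • x = (1 - R / ‖x‖) • x := by
          rw [sub_smul, one_smul]
        rw [this, norm_smul, Real.norm_eq_abs, abs_of_nonneg (by linarith)]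
        field_simp
      -- real inequality
      have hreal : (‖x‖ - R) ^ (2 * p) ≤ h ^ (4 * p) * ‖x‖ ^ (2 * (4 * γ + 1) * p) := by
        have h1 : (‖x‖ - R) ^ (2 * p) ≤ ‖x‖ ^ (2 * p) :=
          Real.rpow_le_rpow (by linarith) (by linarith) (by positivity)
        have hsplit : ‖x‖ ^ (2 * (4 * γ + 1) * p) = ‖x‖ ^ (2 * p) * ‖x‖ ^ (8 * γ * p) := by
          rw [← Real.rpow_add hxn]; ring_nf
        have hRval : R ^ (8 * γ * p) = h ^ (-(4 * p)) := by
          rw [hRdef, ← Real.rpow_mul h0.le]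
          congr 1
          field_simp
          ring
        have hpow : 1 ≤ h ^ (4 * p) * ‖x‖ ^ (8 * γ * p) := by
          have hmono : R ^ (8 * γ * p) ≤ ‖x‖ ^ (8 * γ * p) :=
            Real.rpow_le_rpow hRpos.le hle.le (by positivity)
          rw [hRval] at hmono
          calc (1:ℝ) = h ^ (4 * p) * h ^ (-(4 * p)) := by
                rw [← Real.rpow_add h0]; norm_num
            _ ≤ h ^ (4 * p) * ‖x‖ ^ (8 * γ * p) := by
                apply mul_le_mul_of_nonneg_left hmono (by positivity)
        calc (‖x‖ - R) ^ (2 * p) ≤ ‖x‖ ^ (2 * p) := h1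
          _ = 1 * ‖x‖ ^ (2 * p) := (one_mul _).symm
          _ ≤ (h ^ (4 * p) * ‖x‖ ^ (8 * γ * p)) * ‖x‖ ^ (2 * p) := by
              apply mul_le_mul_of_nonneg_right hpow (by positivity)
          _ = h ^ (4 * p) * ‖x‖ ^ (2 * (4 * γ + 1) * p) := by
              rw [hsplit]; ring
      have hLHS : (‖x - (min 1 (R / ‖x‖)) • x‖₊ : ℝ≥0∞) ^ (2 * p)
          = ENNReal.ofReal ((‖x‖ - R) ^ (2 * p)) := by
        rw [← enorm_eq_nnnorm, ← ofReal_norm, hnorm,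
          ENNReal.ofReal_rpow_of_nonneg (by linarith) (by positivity)]
      have hRHS : ENNReal.ofReal (h ^ (4 * p)) * (‖x‖₊ : ℝ≥0∞) ^ (2 * (4 * γ + 1) * p)
          = ENNReal.ofReal (h ^ (4 * p) * ‖x‖ ^ (2 * (4 * γ + 1) * p)) := by
        rw [← enorm_eq_nnnorm, ← ofReal_norm,
          ENNReal.ofReal_rpow_of_nonneg (norm_nonneg _) (by positivity),
          ← ENNReal.ofReal_mul (by positivity)]
      rw [hLHS, hRHS]
      exact ENNReal.ofReal_le_ofReal hreal
  calc (∫⁻ ω, (‖ζ ω - (min 1 (h ^ (-(1 / (2 * γ))) / ‖ζ ω‖)) • ζ ω‖₊ : ℝ≥0∞) ^ (2 * p) ∂ℙ)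
      ≤ ∫⁻ ω, ENNReal.ofReal (h ^ (4 * p)) * (‖ζ ω‖₊ : ℝ≥0∞) ^ (2 * (4 * γ + 1) * p) ∂ℙ :=
        lintegral_mono key
    _ = ENNReal.ofReal (h ^ (4 * p)) * ∫⁻ ω, (‖ζ ω‖₊ : ℝ≥0∞) ^ (2 * (4 * γ + 1) * p) ∂ℙ :=
        lintegral_const_mul' _ _ ENNReal.ofReal_ne_top
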